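/- Let T be a trivalent tree in Tour(k_1,...,k_n), and let (i_1, j) with i_1 < j be the first pair that faces off in the lazy tournament of T. Then (1) i_1 equals the largest index i ∈ {c,1,...,n} with k_i = 0 (using the convention k_c = 0 and i = c if all k_1,...,k_n are positive), and (2) the laziness rule applies in this first round if and only if k_j = 1 and n ≥ 2 (First Round Lemma). -/

import Mathlib

open SimpleGraph

/-- A candidate leaf-labeled graph on vertex set `Fin V` with `L` labeled leaves. -/
structure PreTree (L V : ℕ) where
  adj : Fin V → Fin V → Bool
  symm' : ∀ u v, adj u v = adj v u
  loopless' : ∀ v, adj v v = false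
  leaf : Fin L → Fin V

def PreTree.G {L V : ℕ} (T : PreTree L V) : SimpleGraph (Fin V) where
  Adj u v := T.adj u v = true
  symm := ⟨fun u v h => by rw [T.symm']; exact h⟩
  loopless := ⟨fun v h => by rw [T.loopless' v] at h; exact Bool.noConfusion h⟩

instance {L V : ℕ} (T : PreTree L V) : DecidableRel T.G.Adj :=
  fun u v => inferInstanceAs (Decidable (T.adj u v = true))

/-- `T` is a trivalent tree with leaves labeled bijectively by `Fin L`. -/
def PreTree.IsTrivalent {L V : ℕ} (T : PreTree L V) : Prop :=
  T.G.IsTree ∧ (∀ v, T.G.degree v = 1 ∨ T.G.degree v = 3) ∧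
    Function.Injective T.leaf ∧ (∀ i, T.G.degree (T.leaf i) = 1) ∧
    (∀ v, T.G.degree v = 1 → ∃ i, T.leaf i = v)

/-- Label-preserving isomorphism of leaf-labeled graphs. -/
def PreTree.Iso {L V : ℕ} (T T' : PreTree L V) : Prop :=
  ∃ σ : Fin V ≃ Fin V, (∀ u v, T'.adj (σ u) (σ v) = T.adj u v) ∧ ∀ i, σ (T.leaf i) = T'.leaf i

/-- Leaves `a = 0` and `b = 1` share a common (internal) vertex. -/
def PreTree.ABAdj {n V : ℕ} (T : PreTree (n+3) V) : Prop :=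
  ∃ v, T.G.Adj (T.leaf 0) v ∧ T.G.Adj (T.leaf 1) v

/-- Number of isomorphism classes of leaf-labeled graphs satisfying `P`. -/
noncomputable def classCount {L V : ℕ} (P : PreTree L V → Prop) : ℕ :=
  Nat.card (Quot fun (T T' : {T : PreTree L V // P T}) => PreTree.Iso T.1 T'.1)

/-- `w` separates `x` from `y` in `G`: every walk from `x` to `y` passes through `w`. -/
def Separates {V : Type*} (G : SimpleGraph V) (w x y : V) : Prop :=
  ∀ p : G.Walk x y, w ∈ p.support

/-- The laziness rule applies: the unlabeled edge `E` is adjacent to a labeled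
edge carrying a label `u ≠ j` with `u > i`. -/
def LazyApplies {n : ℕ} (T : PreTree (n+3) (2*n+4))
    (lab : Sym2 (Fin (2*n+4)) → Option (Fin (n+3)))
    (E : Sym2 (Fin (2*n+4))) (i j : Fin (n+3)) : Prop :=
  ∃ (e : Sym2 (Fin (2*n+4))) (u : Fin (n+3)) (v : Fin (2*n+4)),
    e ∈ T.G.edgeSet ∧ v ∈ e ∧ v ∈ E ∧ e ≠ E ∧ lab e = some u ∧ u ≠ j ∧ i < u

/-- A run of the lazy tournament on a tree with `n+3` leaves (labels ordered
`a = 0 < b = 1 < c = 2 < 1 = 3 < ⋯ < n = n+2` as elements of `Fin (n+3)`).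
`lab t` is the edge labeling before round `t`; round `t` has `loser t < winner t`
on adjacent labeled edges `loserE t`, `winnerE t` sharing vertex `vtx t` with the
unlabeled edge `newE t`, the pair having the maximal smaller label, and `newE t`
gets labeled according to the laziness rule. -/
structure Run (n : ℕ) (T : PreTree (n+3) (2*n+4)) where
  lab : ℕ → Sym2 (Fin (2*n+4)) → Option (Fin (n+3))
  loser : Fin n → Fin (n+3)
  winner : Fin n → Fin (n+3)
  loserE : Fin n → Sym2 (Fin (2*n+4))
  winnerE : Fin n → Sym2 (Fin (2*n+4))
  newE : Fin n → Sym2 (Fin (2*n+4))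
  vtx : Fin n → Fin (2*n+4)
  init_leaf : ∀ (i : Fin (n+3)) (w : Fin (2*n+4)), T.G.Adj (T.leaf i) w →
    lab 0 s(T.leaf i, w) = some i
  init_other : ∀ e : Sym2 (Fin (2*n+4)), (∀ i : Fin (n+3), T.leaf i ∉ e) → lab 0 e = none
  init_nonedge : ∀ e, e ∉ T.G.edgeSet → lab 0 e = none
  lt_lw : ∀ t, loser t < winner t
  loserE_mem : ∀ t, loserE t ∈ T.G.edgeSet
  winnerE_mem : ∀ t, winnerE t ∈ T.G.edgeSet
  newE_mem : ∀ t, newE t ∈ T.G.edgeSet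
  lab_loserE : ∀ t, lab t.1 (loserE t) = some (loser t)
  lab_winnerE : ∀ t, lab t.1 (winnerE t) = some (winner t)
  vtx_mem : ∀ t, vtx t ∈ loserE t ∧ vtx t ∈ winnerE t ∧ vtx t ∈ newE t
  edges_distinct : ∀ t, loserE t ≠ winnerE t ∧ loserE t ≠ newE t ∧ winnerE t ≠ newE t
  newE_unlabeled : ∀ t, lab t.1 (newE t) = none
  max_rule : ∀ (t : Fin n) (e1 e2 e3 : Sym2 (Fin (2*n+4))) (i j : Fin (n+3)) (v : Fin (2*n+4)),
    e1 ∈ T.G.edgeSet → e2 ∈ T.G.edgeSet → e3 ∈ T.G.edgeSet →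
    lab t.1 e1 = some i → lab t.1 e2 = some j → lab t.1 e3 = none → i < j →
    v ∈ e1 → v ∈ e2 → v ∈ e3 → e1 ≠ e2 → e1 ≠ e3 → e2 ≠ e3 →
    i ≤ loser t
  step_lazy : ∀ t : Fin n, LazyApplies T (lab t.1) (newE t) (loser t) (winner t) →
    lab (t.1+1) (newE t) = some (loser t)
  step_nonlazy : ∀ t : Fin n, ¬ LazyApplies T (lab t.1) (newE t) (loser t) (winner t) →
    lab (t.1+1) (newE t) = some (winner t)
  step_frame : ∀ (t : Fin n) (e : Sym2 (Fin (2*n+4))), e ≠ newE t → lab (t.1+1) e = lab t.1 e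

/-- Number of rounds won by label `i`. -/
def Run.wins {n : ℕ} {T : PreTree (n+3) (2*n+4)} (R : Run n T) (i : Fin (n+3)) : ℕ :=
  (Finset.univ.filter fun t : Fin n => R.winner t = i).card

/-- The element of `Fin (n+3)` corresponding to the numeric label `m+1 ∈ {1,…,n}`. -/
def lbl {n : ℕ} (m : Fin n) : Fin (n+3) := ⟨(m:ℕ)+3, by omega⟩

/-- `T ∈ Tour(k₁,…,kₙ)`. -/
def InTour {n : ℕ} (k : Fin n → ℕ) (T : PreTree (n+3) (2*n+4)) : Prop :=
  T.IsTrivalent ∧ T.ABAdj ∧ ∃ R : Run n T, ∀ m : Fin n, R.wins (lbl m) = k m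

/-- `|Tour(k₁,…,kₙ)|` (isomorphism classes). -/
noncomputable def TourCount {n : ℕ} (k : Fin n → ℕ) : ℕ := classCount (InTour k)

/-- `T'` is obtained from `T` by deleting the largest leaf and suppressing
the resulting degree-2 vertex `w`. -/
def DelLast (n : ℕ) (T : PreTree ((n+1)+3) (2*(n+1)+4)) (T' : PreTree (n+3) (2*n+4)) : Prop :=
  ∃ (g : Fin (2*n+4) → Fin (2*(n+1)+4)) (w : Fin (2*(n+1)+4)),
    Function.Injective g ∧
    T.G.Adj (T.leaf (Fin.last (n+3))) w ∧
    (∀ v, v ∈ Set.range g ↔ (v ≠ T.leaf (Fin.last (n+3)) ∧ v ≠ w)) ∧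
    (∀ u u' : Fin (2*n+4), T'.G.Adj u u' ↔
      (T.G.Adj (g u) (g u') ∨ (T.G.Adj (g u) w ∧ T.G.Adj (g u') w ∧ g u ≠ g u'))) ∧
    (∀ i : Fin (n+3), g (T'.leaf i) = T.leaf (Fin.castSucc i))

/-- `T'` is obtained from `T` by successively deleting the leaves `r+1, …, n`. -/
inductive Restricts : (n : ℕ) → (r : ℕ) → PreTree (n+3) (2*n+4) → PreTree (r+3) (2*r+4) → Prop
  | refl (n : ℕ) (T : PreTree (n+3) (2*n+4)) : Restricts n n T T
  | step (n r : ℕ) (T : PreTree ((n+1)+3) (2*(n+1)+4)) (T1 : PreTree (n+3) (2*n+4))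
      (T2 : PreTree (r+3) (2*r+4)) :
      DelLast n T T1 → Restricts n r T1 T2 → Restricts (n+1) r T T2

/-- The composition `k̃_j`: decrement `k j` and delete position `dpos`
(the rightmost zero of the result). -/
def tilde {n : ℕ} (k : Fin (n+1) → ℕ) (dpos : ℕ) (j : Fin (n+1)) : Fin n → ℕ :=
  fun m => if (m:ℕ) < dpos then Function.update k j (k j - 1) (Fin.castSucc m)
           else Function.update k j (k j - 1) (Fin.succ m)

/-- The map `π_lazy` relates `T` to the pair `(j, T')` where `j` is the winner of the
first round of the tournament, the two leaves that competed are deleted (the shared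
vertex becoming a new leaf) and the labels are shifted according to the (non)lazy case. -/
def PiLazyRel (n : ℕ) (k : Fin (n+1) → ℕ) (T : PreTree ((n+1)+3) (2*(n+1)+4))
    (j : Fin (n+1)) (T' : PreTree (n+3) (2*n+4)) : Prop :=
  ∃ (R : Run (n+1) T) (g : Fin (2*n+4) → Fin (2*(n+1)+4)),
    (∀ m : Fin (n+1), R.wins (lbl m) = k m) ∧
    R.winner ⟨0, Nat.succ_pos n⟩ = lbl j ∧
    Function.Injective g ∧
    (∀ v, v ∈ Set.range g ↔
      (v ≠ T.leaf (R.loser ⟨0, Nat.succ_pos n⟩) ∧ v ≠ T.leaf (R.winner ⟨0, Nat.succ_pos n⟩))) ∧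
    (∀ u u' : Fin (2*n+4), T'.G.Adj u u' ↔ T.G.Adj (g u) (g u')) ∧
    (if k j = 1 then
      ∀ β : Fin (n+3), g (T'.leaf β) =
        (if (β:ℕ) = ((R.loser ⟨0, Nat.succ_pos n⟩) : ℕ) then R.vtx ⟨0, Nat.succ_pos n⟩
         else if (β:ℕ) < ((R.winner ⟨0, Nat.succ_pos n⟩) : ℕ) then T.leaf (Fin.castSucc β)
         else T.leaf (Fin.succ β))
     else
      ∀ β : Fin (n+3), g (T'.leaf β) =
        (if (β:ℕ) < ((R.loser ⟨0, Nat.succ_pos n⟩) : ℕ) then T.leaf (Fin.castSucc β)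
         else if (β:ℕ)+1 = ((R.winner ⟨0, Nat.succ_pos n⟩) : ℕ) then R.vtx ⟨0, Nat.succ_pos n⟩
         else T.leaf (Fin.succ β)))

/-! ### Parking functions.
A parking function of size `n` is encoded by `col : Fin n → Fin n`, where `col x` is the
(0-indexed) column of the label `x+1`; the Dyck path condition (for paths from `(0,n)` to
`(n,0)` staying weakly above the diagonal, cells left of down steps) is `IsPF`. -/

def IsPF {n : ℕ} (col : Fin n → Fin n) : Prop :=
  ∀ j : Fin n, n - (j:ℕ) ≤ (Finset.univ.filter fun x => j ≤ col x).card

/-- Dominance index of label `x+1`: the number of columns strictly to its right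
containing no entry greater than `x+1` (empty columns count). -/
def domIdx {n : ℕ} (col : Fin n → Fin n) (x : Fin n) : ℕ :=
  (Finset.univ.filter fun j : Fin n => col x < j ∧ ∀ y, col y = j → y ≤ x).card

/-- Column-restricted: `x > d_x` for all labels `x` (label `x : Fin n` has value `x+1`). -/
def ColRes {n : ℕ} (col : Fin n → Fin n) : Prop := ∀ x : Fin n, domIdx col x < (x:ℕ) + 1

/-- Number of labels in column `j`. -/
def colCount {n : ℕ} (col : Fin n → Fin n) (j : Fin n) : ℕ :=
  (Finset.univ.filter fun x => col x = j).card

/-- `col'` is the image of `col` under the map `r`: remove the row containing the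
label `1`, decrement the remaining labels, and delete the rightmost empty column `E`. -/
def RSpec {n : ℕ} (col : Fin (n+1) → Fin (n+1)) (col' : Fin n → Fin n) : Prop :=
  ∃ E : Fin (n+1),
    (∀ y : Fin (n+1), y ≠ 0 → col y ≠ E) ∧
    (∀ j : Fin (n+1), (∀ y, y ≠ 0 → col y ≠ j) → j ≤ E) ∧
    (∀ x : Fin n, (col' x : ℕ) =
      if (col (Fin.succ x) : ℕ) < (E:ℕ) then (col (Fin.succ x) : ℕ)
      else (col (Fin.succ x) : ℕ) - 1)

/-- `col` is the parking function `τ(T)`: column `col m` contains label `m+1`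
iff the label `col m + 1` wins round `m+1` of the lazy tournament of `T`. -/
def TauRel {n : ℕ} (T : PreTree (n+3) (2*n+4)) (col : Fin n → Fin n) : Prop :=
  ∃ R : Run n T, ∀ t : Fin n, ((R.winner t) : ℕ) = (col t : ℕ) + 3
section FRP
open SimpleGraph
variable {n : ℕ} {T : PreTree (n+3) (2*n+4)}

lemma FR.edge_at {e : Sym2 (Fin (2*n+4))} {v : Fin (2*n+4)} (he : e ∈ T.G.edgeSet) (hv : v ∈ e) :
    ∃ z, T.G.Adj v z ∧ e = s(v, z) := by
  induction e with
  | _ a b =>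
    rw [SimpleGraph.mem_edgeSet] at he
    rcases Sym2.mem_iff.mp hv with rfl | rfl
    · exact ⟨b, he, rfl⟩
    · exact ⟨a, he.symm, Sym2.eq_swap.symm⟩

lemma FR.sym2_third {α : Type*} {a b c : α} {e : Sym2 α} (ha : a ∈ e) (hb : b ∈ e) (hc : c ∈ e)
    (hba : b ≠ a) (hca : c ≠ a) : b = c := by
  induction e with
  | _ x y =>
    rcases Sym2.mem_iff.mp ha with rfl | rfl <;>
    rcases Sym2.mem_iff.mp hb with rfl | rfl <;>
    rcases Sym2.mem_iff.mp hc with rfl | rfl <;> simp_all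

lemma FR.closed_all (hc : T.G.Connected) (S : Set (Fin (2*n+4))) (u : Fin (2*n+4)) (hu : u ∈ S)
    (hcl : ∀ x ∈ S, ∀ y, T.G.Adj x y → y ∈ S) : ∀ z, z ∈ S := by
  intro z
  obtain ⟨w⟩ := hc u z
  clear hc
  revert hu
  induction w with
  | nil => exact fun h => h
  | cons h p ih => exact fun hu => ih (hcl _ hu _ h)

lemma FR.card_bound (hc : T.G.Connected) (S : Finset (Fin (2*n+4))) (u : Fin (2*n+4)) (hu : u ∈ S)
    (hcl : ∀ x ∈ S, ∀ y, T.G.Adj x y → y ∈ S) : 2*n+4 ≤ S.card := by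
  have h := FR.closed_all hc (↑S) u hu (by simpa using hcl)
  calc 2*n+4 = Fintype.card (Fin (2*n+4)) := (Fintype.card_fin _).symm
    _ = Finset.univ.card := rfl
    _ ≤ S.card := Finset.card_le_card (fun z _ => h z)

lemma FR.nbr_unique {x y y' : Fin (2*n+4)} (h1 : T.G.degree x = 1) (ha : T.G.Adj x y)
    (hb : T.G.Adj x y') : y = y' := by
  have hcard : (T.G.neighborFinset x).card ≤ 1 := by
    rw [T.G.card_neighborFinset_eq_degree, h1]
  exact Finset.card_le_one.mp hcard y ((T.G.mem_neighborFinset x y).mpr ha) y'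
    ((T.G.mem_neighborFinset x y').mpr hb)

lemma FR.exists_nbr {x : Fin (2*n+4)} (h1 : T.G.degree x = 1) : ∃ y, T.G.Adj x y := by
  have : 0 < (T.G.neighborFinset x).card := by
    rw [T.G.card_neighborFinset_eq_degree, h1]; omega
  obtain ⟨y, hy⟩ := Finset.card_pos.mp this
  exact ⟨y, (T.G.mem_neighborFinset x y).mp hy⟩

lemma FR.deg3_nbrs {x y1 y2 y3 : Fin (2*n+4)} (h3 : T.G.degree x = 3)
    (h1 : T.G.Adj x y1) (h2 : T.G.Adj x y2) (h3' : T.G.Adj x y3)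
    (h12 : y1 ≠ y2) (h13 : y1 ≠ y3) (h23 : y2 ≠ y3) :
    ∀ z, T.G.Adj x z → z = y1 ∨ z = y2 ∨ z = y3 := by
  have hsub : ({y1, y2, y3} : Finset _) ⊆ T.G.neighborFinset x := by
    intro z hz
    simp only [Finset.mem_insert, Finset.mem_singleton] at hz
    rcases hz with rfl | rfl | rfl <;> simp [SimpleGraph.mem_neighborFinset, h1, h2, h3']
  have hcard : (T.G.neighborFinset x).card ≤ ({y1, y2, y3} : Finset _).card := by
    rw [T.G.card_neighborFinset_eq_degree, h3]
    rw [Finset.card_insert_of_notMem (by simp [h12, h13]),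
      Finset.card_insert_of_notMem (by simp [h23]), Finset.card_singleton]
  have heq := Finset.eq_of_subset_of_card_le hsub hcard
  intro z hz
  have : z ∈ ({y1, y2, y3} : Finset _) := by
    rw [heq]; exact (T.G.mem_neighborFinset x z).mpr hz
  simpa using this

end FRP
section FRP2
open SimpleGraph
variable {n : ℕ} {T : PreTree (n+3) (2*n+4)}

lemma FR.no_leaf_adj_leaf (hn : 1 ≤ n) (hc : T.G.Connected) {x y : Fin (2*n+4)}
    (d1 : T.G.degree x = 1) (d2 : T.G.degree y = 1) (hadj : T.G.Adj x y) : False := by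
  have hb := FR.card_bound hc {x, y} x (by simp) ?_
  · have : ({x, y} : Finset _).card ≤ 2 :=
      le_trans (Finset.card_insert_le _ _) (by simp)
    omega
  · intro a ha b hab
    simp only [Finset.mem_insert, Finset.mem_singleton] at ha ⊢
    rcases ha with rfl | rfl
    · exact Or.inr (FR.nbr_unique d1 hab hadj)
    · exact Or.inl (FR.nbr_unique d2 hab hadj.symm)

lemma FR.no_three_leaf (hn : 1 ≤ n) (hc : T.G.Connected) (hdeg : ∀ v, T.G.degree v = 1 ∨ T.G.degree v = 3)
    {x y1 y2 y3 : Fin (2*n+4)}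
    (h1 : T.G.Adj x y1) (h2 : T.G.Adj x y2) (h3 : T.G.Adj x y3)
    (h12 : y1 ≠ y2) (h13 : y1 ≠ y3) (h23 : y2 ≠ y3)
    (d1 : T.G.degree y1 = 1) (d2 : T.G.degree y2 = 1) (d3 : T.G.degree y3 = 1) : False := by
  have hdx : T.G.degree x = 3 := by
    rcases hdeg x with h | h
    · exact absurd (FR.nbr_unique h h1 h2) h12
    · exact h
  have hnb := FR.deg3_nbrs hdx h1 h2 h3 h12 h13 h23
  have hb := FR.card_bound hc {x, y1, y2, y3} x (by simp) ?_
  · have h2' : ({y2, y3} : Finset (Fin (2*n+4))).card ≤ 2 :=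
      le_trans (Finset.card_insert_le _ _) (by simp)
    have h3' : ({y1, y2, y3} : Finset (Fin (2*n+4))).card ≤ 3 :=
      le_trans (Finset.card_insert_le _ _) (by omega)
    have h4' : ({x, y1, y2, y3} : Finset (Fin (2*n+4))).card ≤ 4 :=
      le_trans (Finset.card_insert_le _ _) (by omega)
    omega
  · intro a ha b hab
    simp only [Finset.mem_insert, Finset.mem_singleton] at ha ⊢
    rcases ha with rfl | rfl | rfl | rfl
    · rcases hnb b hab with rfl | rfl | rfl <;> simp
    · exact Or.inl (FR.nbr_unique d1 hab h1.symm)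
    · exact Or.inl (FR.nbr_unique d2 hab h2.symm)
    · exact Or.inl (FR.nbr_unique d3 hab h3.symm)

variable {R : Run n T}

lemma FR.lab_mono {e : Sym2 (Fin (2*n+4))} {x : Fin (n+3)} {s t : ℕ} (hst : s ≤ t) (htn : t ≤ n)
    (h : R.lab s e = some x) : R.lab t e = some x := by
  induction t with
  | zero => exact (Nat.le_zero.mp hst) ▸ h
  | succ t ih =>
    rcases Nat.lt_or_ge s (t+1) with hlt | hge
    · have htn' : t < n := by omega
      have ht : R.lab t e = some x := ih (by omega) (by omega)
      by_cases hne : e = R.newE ⟨t, htn'⟩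
      · rw [hne, R.newE_unlabeled ⟨t, htn'⟩] at ht; cases ht
      · rw [R.step_frame ⟨t, htn'⟩ e hne]; exact ht
    · have : s = t+1 := by omega
      exact this ▸ h

lemma FR.lab_none_early {e : Sym2 (Fin (2*n+4))} {s t : ℕ} (hst : s ≤ t) (htn : t ≤ n)
    (h : R.lab t e = none) : R.lab s e = none := by
  cases hs : R.lab s e with
  | none => rfl
  | some x => rw [FR.lab_mono hst htn hs] at h; cases h

lemma FR.lab0_class {e : Sym2 (Fin (2*n+4))} {x : Fin (n+3)} (h : R.lab 0 e = some x) :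
    ∃ w, T.G.Adj (T.leaf x) w ∧ e = s(T.leaf x, w) := by
  by_cases he : e ∈ T.G.edgeSet
  · by_cases hl : ∀ i, T.leaf i ∉ e
    · rw [R.init_other e hl] at h; cases h
    · push_neg at hl
      obtain ⟨i, hi⟩ := hl
      obtain ⟨z, hz, hez⟩ := FR.edge_at he hi
      have hli := R.init_leaf i z hz
      rw [hez, hli] at h
      obtain rfl : i = x := Option.some_inj.mp h
      exact ⟨z, hz, hez⟩
  · rw [R.init_nonedge e he] at h; cases h

lemma FR.leaf_lab {i : Fin (n+3)} {w : Fin (2*n+4)} {t : ℕ} (htn : t ≤ n)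
    (hadj : T.G.Adj (T.leaf i) w) : R.lab t s(T.leaf i, w) = some i :=
  FR.lab_mono (Nat.zero_le t) htn (R.init_leaf i w hadj)

lemma FR.origin {x : Fin (n+3)} {e : Sym2 (Fin (2*n+4))} : ∀ {t : ℕ}, t ≤ n → R.lab t e = some x →
    (∃ w, T.G.Adj (T.leaf x) w ∧ e = s(T.leaf x, w)) ∨ (∃ s : Fin n, s.1 + 1 ≤ t ∧ R.newE s = e) := by
  intro t
  induction t with
  | zero => exact fun _ h => Or.inl (FR.lab0_class h)
  | succ t ih =>
    intro htn h
    have htn' : t < n := by omega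
    by_cases hne : e = R.newE ⟨t, htn'⟩
    · exact Or.inr ⟨⟨t, htn'⟩, by simp, hne.symm⟩
    · rw [R.step_frame ⟨t, htn'⟩ e hne] at h
      rcases ih (by omega) h with h' | ⟨s, hs, he⟩
      · exact Or.inl h'
      · exact Or.inr ⟨s, by omega, he⟩

lemma FR.newE_label {x : Fin (n+3)} {s : Fin n} {t : ℕ} (h1 : s.1 + 1 ≤ t) (h2 : t ≤ n)
    (h : R.lab t (R.newE s) = some x) :
    (LazyApplies T (R.lab s.1) (R.newE s) (R.loser s) (R.winner s) ∧ x = R.loser s) ∨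
    (¬ LazyApplies T (R.lab s.1) (R.newE s) (R.loser s) (R.winner s) ∧ x = R.winner s) := by
  by_cases hL : LazyApplies T (R.lab s.1) (R.newE s) (R.loser s) (R.winner s)
  · left
    refine ⟨hL, ?_⟩
    have h' := FR.lab_mono h1 h2 (R.step_lazy s hL)
    rw [h'] at h
    exact (Option.some_inj.mp h).symm
  · right
    refine ⟨hL, ?_⟩
    have h' := FR.lab_mono h1 h2 (R.step_nonlazy s hL)
    rw [h'] at h
    exact (Option.some_inj.mp h).symm

lemma FR.newE_labeled (s : Fin n) : ∃ y, R.lab (s.1+1) (R.newE s) = some y := by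
  by_cases hL : LazyApplies T (R.lab s.1) (R.newE s) (R.loser s) (R.winner s)
  · exact ⟨R.loser s, R.step_lazy s hL⟩
  · exact ⟨R.winner s, R.step_nonlazy s hL⟩

end FRP2
section FRP3
open SimpleGraph
variable {n : ℕ} {T : PreTree (n+3) (2*n+4)} {R : Run n T}

lemma FR.loserE_ne_winnerE (t : Fin n) : R.loserE t ≠ R.winnerE t := (R.edges_distinct t).1

lemma FR.vtx_deg (hdeg : ∀ v, T.G.degree v = 1 ∨ T.G.degree v = 3) (t : Fin n) :
    T.G.degree (R.vtx t) = 3 := by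
  obtain ⟨z1, hz1, he1⟩ := FR.edge_at (R.loserE_mem t) (R.vtx_mem t).1
  obtain ⟨z2, hz2, he2⟩ := FR.edge_at (R.winnerE_mem t) (R.vtx_mem t).2.1
  have hz12 : z1 ≠ z2 := by
    rintro rfl
    exact (R.edges_distinct t).1 (he1.trans he2.symm)
  rcases hdeg (R.vtx t) with h | h
  · exact absurd (FR.nbr_unique h hz1 hz2) hz12
  · exact h

lemma FR.edges_at_vtx (hdeg : ∀ v, T.G.degree v = 1 ∨ T.G.degree v = 3) (t : Fin n)
    {e : Sym2 (Fin (2*n+4))} (he : e ∈ T.G.edgeSet) (hv : R.vtx t ∈ e) :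
    e = R.loserE t ∨ e = R.winnerE t ∨ e = R.newE t := by
  obtain ⟨z1, hz1, he1⟩ := FR.edge_at (R.loserE_mem t) (R.vtx_mem t).1
  obtain ⟨z2, hz2, he2⟩ := FR.edge_at (R.winnerE_mem t) (R.vtx_mem t).2.1
  obtain ⟨z3, hz3, he3⟩ := FR.edge_at (R.newE_mem t) (R.vtx_mem t).2.2
  have hz12 : z1 ≠ z2 := by rintro rfl; exact (R.edges_distinct t).1 (he1.trans he2.symm)
  have hz13 : z1 ≠ z3 := by rintro rfl; exact (R.edges_distinct t).2.1 (he1.trans he3.symm)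
  have hz23 : z2 ≠ z3 := by rintro rfl; exact (R.edges_distinct t).2.2 (he2.trans he3.symm)
  obtain ⟨z, hz, hez⟩ := FR.edge_at he hv
  rcases FR.deg3_nbrs (FR.vtx_deg hdeg t) hz1 hz2 hz3 hz12 hz13 hz23 z hz with rfl | rfl | rfl
  · exact Or.inl (hez.trans he1.symm)
  · exact Or.inr (Or.inl (hez.trans he2.symm))
  · exact Or.inr (Or.inr (hez.trans he3.symm))

lemma FR.vtx_full (hdeg : ∀ v, T.G.degree v = 1 ∨ T.G.degree v = 3) (s : Fin n) {t : ℕ}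
    (hst : s.1 < t) (htn : t ≤ n) {e : Sym2 (Fin (2*n+4))} (he : e ∈ T.G.edgeSet)
    (hv : R.vtx s ∈ e) : ∃ y, R.lab t e = some y := by
  rcases FR.edges_at_vtx hdeg s he hv with rfl | rfl | rfl
  · exact ⟨R.loser s, FR.lab_mono (by omega) htn (R.lab_loserE s)⟩
  · exact ⟨R.winner s, FR.lab_mono (by omega) htn (R.lab_winnerE s)⟩
  · obtain ⟨y, hy⟩ := FR.newE_labeled (R := R) s
    exact ⟨y, FR.lab_mono (by omega) htn hy⟩

lemma FR.vtx_ne (hdeg : ∀ v, T.G.degree v = 1 ∨ T.G.degree v = 3) {s t : Fin n}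
    (hst : s.1 < t.1) : R.vtx s ≠ R.vtx t := by
  intro heq
  obtain ⟨y, hy⟩ := FR.vtx_full hdeg s hst t.2.le (R.newE_mem t) (heq ▸ (R.vtx_mem t).2.2)
  rw [R.newE_unlabeled t] at hy
  cases hy

lemma FR.vtx_injective (hdeg : ∀ v, T.G.degree v = 1 ∨ T.G.degree v = 3) {s t : Fin n}
    (hst : s ≠ t) : R.vtx s ≠ R.vtx t := by
  rcases lt_trichotomy s.1 t.1 with h | h | h
  · exact FR.vtx_ne hdeg h
  · exact absurd (Fin.ext h) hst
  · exact (FR.vtx_ne hdeg h).symm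

lemma FR.lbl_injective {m m' : Fin n} (h : lbl (n := n) m = lbl m') : m = m' := by
  have := congrArg Fin.val h
  simp only [lbl] at this
  exact Fin.ext (by omega)

lemma FR.winner_lbl {k : Fin n → ℕ} (hk : ∑ m, k m = n) (hR : ∀ m, R.wins (lbl m) = k m)
    (t : Fin n) : ∃ m : Fin n, R.winner t = lbl m := by
  classical
  have hsum : ∑ i : Fin (n+3), R.wins i = n := by
    have := Finset.card_eq_sum_card_fiberwise
      (f := R.winner) (s := Finset.univ) (t := Finset.univ) (fun x _ => Finset.mem_univ _)
    simpa [Run.wins] using this.symm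
  have himg : ∑ i ∈ Finset.univ.image (lbl (n := n)), R.wins i = n := by
    rw [Finset.sum_image (fun a _ b _ h => FR.lbl_injective h)]
    rw [Finset.sum_congr rfl (fun m _ => hR m)]
    exact hk
  have hsub : Finset.univ.image (lbl (n := n)) ⊆ Finset.univ := Finset.subset_univ _
  have hsdiff := Finset.sum_sdiff (f := R.wins) hsub
  have hzero : ∑ i ∈ Finset.univ \ Finset.univ.image (lbl (n := n)), R.wins i = 0 := by
    omega
  have hwt : 0 < R.wins (R.winner t) := by
    rw [Run.wins]
    refine Finset.card_pos.mpr ⟨t, ?_⟩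
    simp
  by_contra hno
  push_neg at hno
  have hmem : R.winner t ∈ Finset.univ \ Finset.univ.image (lbl (n := n)) := by
    simp only [Finset.mem_sdiff, Finset.mem_univ, true_and, Finset.mem_image]
    rintro ⟨m, hm⟩
    exact hno m hm.symm
  have := Finset.sum_eq_zero_iff.mp hzero _ hmem
  omega

lemma FR.winner_ge3 {k : Fin n → ℕ} (hk : ∑ m, k m = n) (hR : ∀ m, R.wins (lbl m) = k m)
    (t : Fin n) : 3 ≤ (R.winner t : ℕ) := by
  obtain ⟨m, hm⟩ := FR.winner_lbl hk hR t
  rw [hm]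
  simp [lbl]

lemma FR.wins_eq_zero {i : Fin (n+3)} (h : ∀ t, R.winner t ≠ i) : R.wins i = 0 := by
  rw [Run.wins]
  rw [Finset.card_eq_zero]
  exact Finset.filter_eq_empty_iff.mpr (fun t _ => h t)

end FRP3
section FRP4
open SimpleGraph
variable {n : ℕ} {T : PreTree (n+3) (2*n+4)} {R : Run n T}

lemma FR.vtx_not_leaf (hdeg : ∀ v, T.G.degree v = 1 ∨ T.G.degree v = 3)
    (hleafdeg : ∀ i, T.G.degree (T.leaf i) = 1) (t : Fin n) (i : Fin (n+3)) :
    R.vtx t ≠ T.leaf i := by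
  intro h
  have h3 := FR.vtx_deg (R := R) hdeg t
  rw [h, hleafdeg] at h3
  cases h3

lemma FR.vtx_eq_snd (hdeg : ∀ v, T.G.degree v = 1 ∨ T.G.degree v = 3)
    (hleafdeg : ∀ i, T.G.degree (T.leaf i) = 1) {t : Fin n} {i : Fin (n+3)}
    {w : Fin (2*n+4)} {E : Sym2 (Fin (2*n+4))}
    (hE : E = s(T.leaf i, w)) (hmem : R.vtx t ∈ E) : R.vtx t = w := by
  rw [hE] at hmem
  rcases Sym2.mem_iff.mp hmem with h | h
  · exact absurd h (FR.vtx_not_leaf hdeg hleafdeg t i)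
  · exact h

lemma FR.loser_le_aux (hn : 1 ≤ n)
    (hdeg : ∀ v, T.G.degree v = 1 ∨ T.G.degree v = 3)
    (hleafdeg : ∀ i, T.G.degree (T.leaf i) = 1)
    (t : Fin n) (IH : ∀ s : Fin n, s.1 < t.1 → R.loser s ≤ R.loser ⟨0, hn⟩) :
    R.loser t ≤ R.loser ⟨0, hn⟩ := by
  by_contra hcon
  push_neg at hcon
  have hlw := R.lt_lw t
  rcases FR.origin (R := R) t.2.le (R.lab_winnerE t) with ⟨w, hadjw, hWe⟩ | ⟨s, hs1, hse⟩
  · have hvw : R.vtx t = w := FR.vtx_eq_snd hdeg hleafdeg hWe (R.vtx_mem t).2.1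
    rcases FR.origin (R := R) t.2.le (R.lab_loserE t) with ⟨w', hadjw', hLe⟩ | ⟨r, hr1, hre⟩
    · have hmr := R.max_rule ⟨0, hn⟩ (R.loserE t) (R.winnerE t) (R.newE t)
        (R.loser t) (R.winner t) (R.vtx t)
        (R.loserE_mem t) (R.winnerE_mem t) (R.newE_mem t)
        (by rw [hLe]; exact R.init_leaf _ _ hadjw')
        (by rw [hWe]; exact R.init_leaf _ _ hadjw)
        (FR.lab_none_early (Nat.zero_le _) t.2.le (R.newE_unlabeled t))
        hlw (R.vtx_mem t).1 (R.vtx_mem t).2.1 (R.vtx_mem t).2.2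
        (R.edges_distinct t).1 (R.edges_distinct t).2.1 (R.edges_distinct t).2.2
      exact absurd hmr (not_le.mpr hcon)
    · rcases FR.newE_label hr1 t.2.le (hre ▸ R.lab_loserE t) with ⟨hLz, heq⟩ | ⟨hNL, heq⟩
      · exact absurd (heq ▸ IH r (by omega) : R.loser t ≤ _) hcon.not_ge
      · apply hNL
        exact ⟨R.winnerE t, R.winner t, R.vtx t, R.winnerE_mem t, (R.vtx_mem t).2.1,
          (by rw [hre]; exact (R.vtx_mem t).1),
          (by rw [hre]; exact (R.edges_distinct t).1.symm),
          (by rw [hWe]; exact FR.leaf_lab (Nat.le_of_lt r.2) hadjw),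
          (by rw [← heq]; exact hlw.ne'),
          (lt_of_le_of_lt (IH r (by omega)) (lt_trans hcon hlw))⟩
  · rcases FR.newE_label hs1 t.2.le (hse ▸ R.lab_winnerE t) with ⟨hLzs, heqs⟩ | ⟨hNLs, heqs⟩
    · have h1 : R.winner t ≤ R.loser ⟨0, hn⟩ := heqs ▸ IH s (by omega)
      exact absurd (lt_trans hcon hlw) h1.not_gt
    · rcases FR.origin (R := R) t.2.le (R.lab_loserE t) with ⟨w', hadjw', hLe⟩ | ⟨r, hr1, hre⟩
      · apply hNLs
        exact ⟨R.loserE t, R.loser t, R.vtx t, R.loserE_mem t, (R.vtx_mem t).1,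
          (by rw [hse]; exact (R.vtx_mem t).2.1),
          (by rw [hse]; exact (R.edges_distinct t).1),
          (by rw [hLe]; exact FR.leaf_lab (Nat.le_of_lt s.2) hadjw'),
          (by rw [← heqs]; exact hlw.ne),
          (lt_of_le_of_lt (IH s (by omega)) hcon)⟩
      · rcases FR.newE_label hr1 t.2.le (hre ▸ R.lab_loserE t) with ⟨hLzr, heqr⟩ | ⟨hNLr, heqr⟩
        · exact absurd (heqr ▸ IH r (by omega) : R.loser t ≤ _) hcon.not_ge
        · have hrs : r ≠ s := by
            intro h
            rw [h] at hre
            exact (R.edges_distinct t).1 (hre.symm.trans hse)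
          have hrsv : r.1 ≠ s.1 := fun h => hrs (Fin.ext h)
          rcases lt_or_gt_of_ne hrsv with hlt | hgt
          · apply hNLs
            refine ⟨R.loserE t, R.loser t, R.vtx t, R.loserE_mem t, (R.vtx_mem t).1,
              (by rw [hse]; exact (R.vtx_mem t).2.1),
              (by rw [hse]; exact (R.edges_distinct t).1),
              ?_, (by rw [← heqs]; exact hlw.ne),
              (lt_of_le_of_lt (IH s (by omega)) hcon)⟩
            have hstep : R.lab (r.1+1) (R.newE r) = some (R.winner r) := R.step_nonlazy r hNLr
            rw [hre, ← heqr] at hstep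
            exact FR.lab_mono (by omega) (Nat.le_of_lt s.2) hstep
          · apply hNLr
            refine ⟨R.winnerE t, R.winner t, R.vtx t, R.winnerE_mem t, (R.vtx_mem t).2.1,
              (by rw [hre]; exact (R.vtx_mem t).1),
              (by rw [hre]; exact (R.edges_distinct t).1.symm),
              ?_, (by rw [← heqr]; exact hlw.ne'),
              (lt_of_le_of_lt (IH r (by omega)) (lt_trans hcon hlw))⟩
            have hstep : R.lab (s.1+1) (R.newE s) = some (R.winner s) := R.step_nonlazy s hNLs
            rw [hse, ← heqs] at hstep
            exact FR.lab_mono (by omega) (Nat.le_of_lt r.2) hstep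

lemma FR.loser_le (hn : 1 ≤ n)
    (hdeg : ∀ v, T.G.degree v = 1 ∨ T.G.degree v = 3)
    (hleafdeg : ∀ i, T.G.degree (T.leaf i) = 1) (t : Fin n) :
    R.loser t ≤ R.loser ⟨0, hn⟩ := by
  have H : ∀ N, ∀ t : Fin n, t.1 < N → R.loser t ≤ R.loser ⟨0, hn⟩ := by
    intro N
    induction N with
    | zero => exact fun t ht => absurd ht (Nat.not_lt_zero _)
    | succ N ih =>
      exact fun t ht => FR.loser_le_aux hn hdeg hleafdeg t (fun s hs => ih s (by omega))
  exact H (t.1+1) t (Nat.lt_succ_self _)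

end FRP4
section FRP5
open SimpleGraph
variable {n : ℕ} {T : PreTree (n+3) (2*n+4)} {R : Run n T}

lemma FR.winner_ne_aux (hn : 1 ≤ n)
    (hdeg : ∀ v, T.G.degree v = 1 ∨ T.G.degree v = 3)
    (hleafdeg : ∀ i, T.G.degree (T.leaf i) = 1)
    (t : Fin n) (IH : ∀ s : Fin n, s.1 < t.1 → R.winner s ≠ R.loser ⟨0, hn⟩) :
    R.winner t ≠ R.loser ⟨0, hn⟩ := by
  intro hW
  have ht0 : t.1 ≠ 0 := by
    intro h
    have ht : t = ⟨0, hn⟩ := Fin.ext h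
    rw [ht] at hW
    exact (R.lt_lw ⟨0, hn⟩).ne' hW
  have hlw := R.lt_lw t
  obtain ⟨w0, hadj0, hLe0⟩ := FR.lab0_class (R := R) (R.lab_loserE ⟨0, hn⟩)
  have hv0 : R.vtx ⟨0, hn⟩ = w0 := FR.vtx_eq_snd hdeg hleafdeg hLe0 (R.vtx_mem ⟨0,hn⟩).1
  rcases FR.origin (R := R) t.2.le (R.lab_winnerE t) with ⟨w, hadjw, hWe⟩ | ⟨s, hs1, hse⟩
  · have hvw : R.vtx t = w := FR.vtx_eq_snd hdeg hleafdeg hWe (R.vtx_mem t).2.1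
    have hww0 : w = w0 := FR.nbr_unique (hleafdeg _) (hW ▸ hadjw) hadj0
    have hveq : R.vtx ⟨0,hn⟩ = R.vtx t := by rw [hv0, hvw, hww0]
    exact FR.vtx_ne hdeg (show ((⟨0,hn⟩ : Fin n)).1 < t.1 by simpa using Nat.pos_of_ne_zero ht0) hveq
  · rcases FR.newE_label hs1 t.2.le (hse ▸ R.lab_winnerE t) with ⟨hLz, heq⟩ | ⟨hNL, heq⟩
    · obtain ⟨e'', u'', v'', hem, hve, hvE, hne, hlab'', hunej, hilt⟩ := hLz
      have hvs_ne : v'' ≠ R.vtx s := by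
        intro h
        rcases FR.edges_at_vtx hdeg s hem (h ▸ hve) with h' | h' | h'
        · rw [h', R.lab_loserE s] at hlab''
          exact absurd (Option.some_inj.mp hlab'') hilt.ne
        · rw [h', R.lab_winnerE s] at hlab''
          exact hunej (Option.some_inj.mp hlab'').symm
        · exact hne h'
      have hvt_ne : R.vtx t ≠ R.vtx s :=
        (FR.vtx_ne hdeg (show s.1 < t.1 by omega)).symm
      have hv'' : R.vtx t = v'' :=
        FR.sym2_third (a := R.vtx s) (e := R.winnerE t)
          (hse ▸ (R.vtx_mem s).2.2) (R.vtx_mem t).2.1 (hse ▸ hvE) hvt_ne hvs_ne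
      have hlab2 : R.lab t.1 e'' = some u'' := FR.lab_mono (by omega) t.2.le hlab''
      have hmr := R.max_rule t (R.winnerE t) e'' (R.newE t) (R.winner t) u'' (R.vtx t)
        (R.winnerE_mem t) hem (R.newE_mem t)
        (R.lab_winnerE t) hlab2 (R.newE_unlabeled t)
        (by rw [heq]; exact hilt)
        (R.vtx_mem t).2.1 (by rw [hv'']; exact hve) (R.vtx_mem t).2.2
        (by rw [← hse]; exact fun h => hne h.symm)
        (R.edges_distinct t).2.2
        (by intro h; rw [h, R.newE_unlabeled t] at hlab2; cases hlab2)
      exact absurd hmr hlw.not_ge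
    · exact IH s (by omega) (by rw [← heq]; exact hW)

lemma FR.winner_ne (hn : 1 ≤ n)
    (hdeg : ∀ v, T.G.degree v = 1 ∨ T.G.degree v = 3)
    (hleafdeg : ∀ i, T.G.degree (T.leaf i) = 1) (t : Fin n) :
    R.winner t ≠ R.loser ⟨0, hn⟩ := by
  have H : ∀ N, ∀ t : Fin n, t.1 < N → R.winner t ≠ R.loser ⟨0, hn⟩ := by
    intro N
    induction N with
    | zero => exact fun t ht => absurd ht (Nat.not_lt_zero _)
    | succ N ih =>
      exact fun t ht => FR.winner_ne_aux hn hdeg hleafdeg t (fun s hs => ih s (by omega))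
  exact H (t.1+1) t (Nat.lt_succ_self _)

end FRP5
section FRP6
open SimpleGraph
variable {n : ℕ} {T : PreTree (n+3) (2*n+4)} {R : Run n T}

lemma FR.val0 : ((0 : Fin (n+3)) : ℕ) = 0 := rfl
lemma FR.val1 : ((1 : Fin (n+3)) : ℕ) = 1 := rfl
lemma FR.val2 : ((2 : Fin (n+3)) : ℕ) = 2 := rfl

lemma FR.vtx_ne_v1 {k : Fin n → ℕ} (hk : ∑ m, k m = n) (hR : ∀ m, R.wins (lbl m) = k m)
    (hdeg : ∀ v, T.G.degree v = 1 ∨ T.G.degree v = 3)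
    {v1 : Fin (2*n+4)} (hav1 : T.G.Adj (T.leaf 0) v1) (hbv1 : T.G.Adj (T.leaf 1) v1)
    (t : Fin n) : R.vtx t ≠ v1 := by
  intro h
  have key : ∀ i : Fin (n+3), T.G.Adj (T.leaf i) v1 → R.loser t = i ∨ R.winner t = i := by
    intro i hadj
    have hmem : s(T.leaf i, v1) ∈ T.G.edgeSet := T.G.mem_edgeSet.mpr hadj
    have hvm : R.vtx t ∈ s(T.leaf i, v1) := by rw [h]; exact Sym2.mem_iff.mpr (Or.inr rfl)
    have hlab : R.lab t.1 s(T.leaf i, v1) = some i := FR.leaf_lab t.2.le hadj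
    rcases FR.edges_at_vtx hdeg t hmem hvm with h' | h' | h'
    · left; rw [h', R.lab_loserE t] at hlab; exact Option.some_inj.mp hlab
    · right; rw [h', R.lab_winnerE t] at hlab; exact Option.some_inj.mp hlab
    · rw [h', R.newE_unlabeled t] at hlab; cases hlab
  have hw3 := FR.winner_ge3 hk hR t
  rcases key 0 hav1 with h0 | h0
  · rcases key 1 hbv1 with h1 | h1
    · rw [h0] at h1
      have := congrArg Fin.val h1
      rw [FR.val0, FR.val1] at this
      omega
    · rw [h1, FR.val1] at hw3; omega
  · rw [h0, FR.val0] at hw3; omega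

lemma FR.vtx_surj (hdeg : ∀ v, T.G.degree v = 1 ∨ T.G.degree v = 3)
    (hleafdeg : ∀ i, T.G.degree (T.leaf i) = 1) (hleafinj : Function.Injective T.leaf)
    (hleafsurj : ∀ v, T.G.degree v = 1 → ∃ i, T.leaf i = v)
    {v1 : Fin (2*n+4)} (hv13 : T.G.degree v1 = 3)
    (hvtxne : ∀ t, R.vtx t ≠ v1)
    {v : Fin (2*n+4)} (hv3 : T.G.degree v = 3) (hne : v ≠ v1) : ∃ t, R.vtx t = v := by
  classical
  set A : Finset (Fin (2*n+4)) := Finset.univ.filter (fun u => T.G.degree u = 1) with hA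
  set B : Finset (Fin (2*n+4)) := Finset.univ.filter (fun u => T.G.degree u = 3) with hB
  have hAcard : A.card = n+3 := by
    have hAeq : A = Finset.univ.image T.leaf := by
      ext u
      simp only [hA, Finset.mem_filter, Finset.mem_univ, true_and, Finset.mem_image]
      constructor
      · intro hu
        obtain ⟨i, hi⟩ := hleafsurj u hu
        exact ⟨i, hi⟩
      · rintro ⟨i, rfl⟩
        exact hleafdeg i
    rw [hAeq, Finset.card_image_of_injective _ hleafinj, Finset.card_univ, Fintype.card_fin]
  have hABcard : A.card + B.card = 2*n+4 := by
    have hBeq : B = Finset.univ.filter (fun u => ¬ T.G.degree u = 1) := by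
      ext u
      simp only [hB, Finset.mem_filter, Finset.mem_univ, true_and]
      constructor
      · intro h h1
        rw [h1] at h
        omega
      · intro h
        rcases hdeg u with h1 | h3
        · exact absurd h1 h
        · exact h3
    rw [hA, hBeq, Finset.card_filter_add_card_filter_not, Finset.card_univ,
      Fintype.card_fin]
  have hBcard : B.card = n+1 := by omega
  have hv1B : v1 ∈ B := by simp [hB, hv13]
  have hvB : v ∈ B.erase v1 := by simp [Finset.mem_erase, hne, hB, hv3]
  have hCcard : (B.erase v1).card = n := by
    rw [Finset.card_erase_of_mem hv1B]
    omega
  have hvtxinj : Function.Injective R.vtx :=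
    fun s t h => by_contra fun hne' => (FR.vtx_injective hdeg hne') h
  have himg : Finset.univ.image R.vtx ⊆ B.erase v1 := by
    intro u hu
    simp only [Finset.mem_image] at hu
    obtain ⟨t, -, rfl⟩ := hu
    simp [Finset.mem_erase, hvtxne t, hB, FR.vtx_deg hdeg t]
  have himgcard : (Finset.univ.image R.vtx).card = n := by
    rw [Finset.card_image_of_injective _ hvtxinj, Finset.card_univ, Fintype.card_fin]
  have heq := Finset.eq_of_subset_of_card_le himg (by omega)
  rw [← heq] at hvB
  simp only [Finset.mem_image] at hvB
  obtain ⟨t, ht⟩ := hvB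
  exact ⟨t, ht.2⟩

end FRP6
section FRP7
open SimpleGraph
variable {n : ℕ} {T : PreTree (n+3) (2*n+4)} {R : Run n T}

lemma FR.fin_ne01 : (0 : Fin (n+3)) ≠ 1 := by
  intro h
  have := congrArg Fin.val h
  rw [FR.val0, FR.val1] at this
  omega

lemma FR.cherry_bound (hn : 1 ≤ n) (hleafinj : Function.Injective T.leaf)
    {p q : Fin (n+3)} {v' z : Fin (2*n+4)} (hpq : p < q)
    (hp : T.G.Adj (T.leaf p) v') (hq : T.G.Adj (T.leaf q) v') (hz : T.G.Adj v' z)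
    (hlab3 : R.lab 0 s(v', z) = none) : p ≤ R.loser ⟨0, hn⟩ := by
  have hne12 : s(T.leaf p, v') ≠ s(T.leaf q, v') := by
    intro h
    rcases Sym2.eq_iff.mp h with ⟨h1, -⟩ | ⟨h1, h2⟩
    · exact hpq.ne (hleafinj h1)
    · exact hpq.ne (hleafinj (h1.trans h2))
  have hlab1 := R.init_leaf p v' hp
  have hlab2 := R.init_leaf q v' hq
  have hne13 : s(T.leaf p, v') ≠ s(v', z) := by
    intro h
    rw [h, hlab3] at hlab1
    cases hlab1
  have hne23 : s(T.leaf q, v') ≠ s(v', z) := by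
    intro h
    rw [h, hlab3] at hlab2
    cases hlab2
  exact R.max_rule ⟨0, hn⟩ s(T.leaf p, v') s(T.leaf q, v') s(v', z) p q v'
    (T.G.mem_edgeSet.mpr hp) (T.G.mem_edgeSet.mpr hq) (T.G.mem_edgeSet.mpr hz)
    hlab1 hlab2 hlab3 hpq
    (Sym2.mem_iff.mpr (Or.inr rfl)) (Sym2.mem_iff.mpr (Or.inr rfl))
    (Sym2.mem_iff.mpr (Or.inl rfl)) hne12 hne13 hne23

lemma FR.internal_card (hdeg : ∀ v, T.G.degree v = 1 ∨ T.G.degree v = 3)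
    (hleafdeg : ∀ i, T.G.degree (T.leaf i) = 1) (hleafinj : Function.Injective T.leaf)
    (hleafsurj : ∀ v, T.G.degree v = 1 → ∃ i, T.leaf i = v) :
    (Finset.univ.filter (fun u => T.G.degree u = 3)).card = n+1 := by
  classical
  have hAcard : (Finset.univ.filter (fun u => T.G.degree u = 1)).card = n+3 := by
    have hAeq : Finset.univ.filter (fun u => T.G.degree u = 1) = Finset.univ.image T.leaf := by
      ext u
      simp only [Finset.mem_filter, Finset.mem_univ, true_and, Finset.mem_image]
      constructor
      · intro hu
        obtain ⟨i, hi⟩ := hleafsurj u hu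
        exact ⟨i, hi⟩
      · rintro ⟨i, rfl⟩
        exact hleafdeg i
    rw [hAeq, Finset.card_image_of_injective _ hleafinj, Finset.card_univ, Fintype.card_fin]
  have hBeq : Finset.univ.filter (fun u => T.G.degree u = 3)
      = Finset.univ.filter (fun u => ¬ T.G.degree u = 1) := by
    ext u
    simp only [Finset.mem_filter, Finset.mem_univ, true_and]
    constructor
    · intro h h1
      rw [h1] at h
      omega
    · intro h
      rcases hdeg u with h1 | h3
      · exact absurd h1 h
      · exact h3
  have := Finset.card_filter_add_card_filter_not
    (s := (Finset.univ : Finset (Fin (2*n+4)))) (p := fun u => T.G.degree u = 1)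
  rw [Finset.card_univ, Fintype.card_fin] at this
  rw [hBeq]
  omega

lemma FR.loser0_ge2 (hn : 1 ≤ n) (hc : T.G.Connected)
    (hdeg : ∀ v, T.G.degree v = 1 ∨ T.G.degree v = 3)
    (hleafdeg : ∀ i, T.G.degree (T.leaf i) = 1) (hleafinj : Function.Injective T.leaf)
    (hleafsurj : ∀ v, T.G.degree v = 1 → ∃ i, T.leaf i = v)
    {v1 : Fin (2*n+4)} (hav1 : T.G.Adj (T.leaf 0) v1) (hbv1 : T.G.Adj (T.leaf 1) v1) :
    2 ≤ (R.loser ⟨0, hn⟩ : ℕ) := by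
  classical
  have hex : ∀ i : Fin (n+3), ∃ w, T.G.Adj (T.leaf i) w := fun i => FR.exists_nbr (hleafdeg i)
  choose f hf using hex
  have hlf01 : T.leaf 0 ≠ T.leaf 1 := fun h => FR.fin_ne01 (hleafinj h)
  have hfv1 : ∀ i, f i = v1 → i = 0 ∨ i = 1 := by
    intro i hi
    by_contra hno
    push_neg at hno
    obtain ⟨h0, h1⟩ := hno
    exact FR.no_three_leaf hn hc hdeg hav1.symm hbv1.symm (hi ▸ (hf i)).symm
      hlf01 (fun h => h0 (hleafinj h).symm) (fun h => h1 (hleafinj h).symm)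
      (hleafdeg 0) (hleafdeg 1) (hleafdeg i)
  have hf0 : f 0 = v1 := FR.nbr_unique (hleafdeg 0) (hf 0) hav1
  have hf1 : f 1 = v1 := FR.nbr_unique (hleafdeg 1) (hf 1) hbv1
  have hfd3 : ∀ i, T.G.degree (f i) = 3 := by
    intro i
    rcases hdeg (f i) with h | h
    · exact (FR.no_leaf_adj_leaf hn hc (hleafdeg i) h (hf i)).elim
    · exact h
  set X : Finset (Fin (n+3)) := Finset.univ.filter (fun i => f i ≠ v1) with hX
  have hXcard : n+1 ≤ X.card := by
    have hsub : Finset.univ \ ({0, 1} : Finset (Fin (n+3))) ⊆ X := by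
      intro i hi
      simp only [Finset.mem_sdiff, Finset.mem_univ, true_and, Finset.mem_insert,
        Finset.mem_singleton] at hi
      simp only [hX, Finset.mem_filter, Finset.mem_univ, true_and]
      intro hfi
      rcases hfv1 i hfi with rfl | rfl
      · exact hi (Or.inl rfl)
      · exact hi (Or.inr rfl)
    have hcd : (Finset.univ \ ({0,1} : Finset (Fin (n+3)))).card = n+1 := by
      rw [Finset.card_sdiff_of_subset (Finset.subset_univ _), Finset.card_univ, Fintype.card_fin]
      rw [Finset.card_insert_of_notMem (by simp [FR.fin_ne01]), Finset.card_singleton]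
      omega
    rw [← hcd]
    exact Finset.card_le_card hsub
  have hnoninj : ¬ (∀ p ∈ X, ∀ q ∈ X, f p = f q → p = q) := by
    intro hinj
    have hv13 := hf0 ▸ hfd3 0
    have hmap : ∀ p ∈ X, f p ∈ (Finset.univ.filter (fun u => T.G.degree u = 3)).erase v1 := by
      intro p hp
      simp only [Finset.mem_erase, Finset.mem_filter, Finset.mem_univ, true_and]
      exact ⟨(Finset.mem_filter.mp hp).2, hfd3 p⟩
    have hle := Finset.card_le_card_of_injOn f hmap
      (fun a ha b hb h => hinj a (Finset.mem_coe.mp ha) b (Finset.mem_coe.mp hb) h)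
    have hBc := FR.internal_card (T := T) hdeg hleafdeg hleafinj hleafsurj
    have hv1B : v1 ∈ Finset.univ.filter (fun u => T.G.degree u = 3) := by
      simp [hv13]
    rw [Finset.card_erase_of_mem hv1B, hBc] at hle
    omega
  push_neg at hnoninj
  obtain ⟨p, hp, q, hq, hfpq, hpq⟩ := hnoninj
  have hpv1 : f p ≠ v1 := (Finset.mem_filter.mp hp).2
  have hp2 : 2 ≤ (p : ℕ) := by
    have h0 : p ≠ 0 := fun h => hpv1 (h ▸ hf0)
    have h1 : p ≠ 1 := fun h => hpv1 (h ▸ hf1)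
    have v0 : p ≠ 0 → (p:ℕ) ≠ 0 := fun hh hv => hh (Fin.ext (hv.trans FR.val0.symm))
    have v1' : p ≠ 1 → (p:ℕ) ≠ 1 := fun hh hv => hh (Fin.ext (hv.trans FR.val1.symm))
    have := v0 h0
    have := v1' h1
    omega
  have hq2 : 2 ≤ (q : ℕ) := by
    have h0 : q ≠ 0 := fun h => hpv1 (hfpq ▸ h ▸ hf0)
    have h1 : q ≠ 1 := fun h => hpv1 (hfpq ▸ h ▸ hf1)
    have v0 : q ≠ 0 → (q:ℕ) ≠ 0 := fun hh hv => hh (Fin.ext (hv.trans FR.val0.symm))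
    have v1' : q ≠ 1 → (q:ℕ) ≠ 1 := fun hh hv => hh (Fin.ext (hv.trans FR.val1.symm))
    have := v0 h0
    have := v1' h1
    omega
  have hadjp : T.G.Adj (T.leaf p) (f p) := hf p
  have hadjq : T.G.Adj (T.leaf q) (f p) := hfpq ▸ hf q
  -- third neighbor z
  have hlpq : T.leaf p ≠ T.leaf q := fun h => hpq (hleafinj h)
  have hsubnbr : ({T.leaf p, T.leaf q} : Finset _) ⊆ T.G.neighborFinset (f p) := by
    intro u hu
    simp only [Finset.mem_insert, Finset.mem_singleton] at hu
    rcases hu with rfl | rfl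
    · exact (T.G.mem_neighborFinset _ _).mpr hadjp.symm
    · exact (T.G.mem_neighborFinset _ _).mpr hadjq.symm
  have hzcard : 0 < ((T.G.neighborFinset (f p)) \ {T.leaf p, T.leaf q}).card := by
    rw [Finset.card_sdiff_of_subset hsubnbr, T.G.card_neighborFinset_eq_degree, hfd3 p,
      Finset.card_insert_of_notMem (by simp [hlpq]), Finset.card_singleton]
    omega
  obtain ⟨z, hz⟩ := Finset.card_pos.mp hzcard
  rw [Finset.mem_sdiff] at hz
  obtain ⟨hznbr, hznot⟩ := hz
  have hzadj : T.G.Adj (f p) z := (T.G.mem_neighborFinset _ _).mp hznbr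
  have hzp : z ≠ T.leaf p := fun h => hznot (by simp [h])
  have hzq : z ≠ T.leaf q := fun h => hznot (by simp [h])
  have hlab3 : R.lab 0 s(f p, z) = none := by
    cases hl : R.lab 0 s(f p, z) with
    | none => rfl
    | some x =>
      exfalso
      obtain ⟨w'', hadj'', he''⟩ := FR.lab0_class (R := R) hl
      rcases Sym2.eq_iff.mp he'' with ⟨h1, h2⟩ | ⟨h1, h2⟩
      · have hd := hfd3 p
        rw [h1, hleafdeg] at hd
        omega
      · have hzx : z = T.leaf x := h2
        refine FR.no_three_leaf hn hc hdeg hadjp.symm hadjq.symm hzadj hlpq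
          (fun h => hzp h.symm) (fun h => hzq h.symm)
          (hleafdeg p) (hleafdeg q) ?_
        rw [hzx]
        exact hleafdeg x
  rcases lt_or_gt_of_ne hpq with hlt | hgt
  · have := FR.cherry_bound hn hleafinj hlt hadjp hadjq hzadj hlab3
    have hle := Fin.le_def.mp this
    omega
  · have := FR.cherry_bound hn hleafinj hgt hadjq hadjp hzadj hlab3
    have hle := Fin.le_def.mp this
    omega

end FRP7

/-- **First Round Lemma.** For `T ∈ Tour(k)`: (1) the loser of the first round
is the largest index in `{c,1,…,n}` whose `k`-value is `0` (with `k_c = 0` by convention,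
`c` being `2 : Fin (n+3)`); (2) the laziness rule applies in the first round iff the winner's
part equals `1` and `n ≥ 2`. -/
theorem first_round (n : ℕ) (hn : 1 ≤ n) (k : Fin n → ℕ) (hk : ∑ m, k m = n)
    (T : PreTree (n+3) (2*n+4)) (hT : T.IsTrivalent) (hab : T.ABAdj)
    (R : Run n T) (hR : ∀ m : Fin n, R.wins (lbl m) = k m) :
    ((R.loser ⟨0, hn⟩ = (2 : Fin (n+3)) ∨ ∃ m : Fin n, R.loser ⟨0, hn⟩ = lbl m ∧ k m = 0) ∧
      (∀ m : Fin n, k m = 0 → lbl m ≤ R.loser ⟨0, hn⟩)) ∧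
    (LazyApplies T (R.lab 0) (R.newE ⟨0, hn⟩) (R.loser ⟨0, hn⟩) (R.winner ⟨0, hn⟩) ↔
      ((∃ m : Fin n, R.winner ⟨0, hn⟩ = lbl m ∧ k m = 1) ∧ 2 ≤ n)) := by
  classical
  obtain ⟨htree, hdeg, hleafinj, hleafdeg, hleafsurj⟩ := hT
  have hc : T.G.Connected := htree.1
  obtain ⟨v1, hav1, hbv1⟩ := hab
  have hlf01 : T.leaf 0 ≠ T.leaf 1 := fun h => FR.fin_ne01 (hleafinj h)
  have hv13 : T.G.degree v1 = 3 := by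
    rcases hdeg v1 with h | h
    · exact absurd (FR.nbr_unique h hav1.symm hbv1.symm) hlf01
    · exact h
  have h2le : 2 ≤ (R.loser ⟨0,hn⟩ : ℕ) :=
    FR.loser0_ge2 hn hc hdeg hleafdeg hleafinj hleafsurj hav1 hbv1
  have hKw : ∀ t, R.winner t ≠ R.loser ⟨0,hn⟩ := FR.winner_ne hn hdeg hleafdeg
  have part1a : R.loser ⟨0,hn⟩ = (2:Fin (n+3)) ∨ ∃ m, R.loser ⟨0,hn⟩ = lbl m ∧ k m = 0 := by
    have hltn : (R.loser ⟨0,hn⟩ : ℕ) < n+3 := (R.loser ⟨0,hn⟩).2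
    by_cases h2 : (R.loser ⟨0,hn⟩ : ℕ) = 2
    · exact Or.inl (Fin.ext (h2.trans FR.val2.symm))
    · right
      refine ⟨⟨(R.loser ⟨0,hn⟩ : ℕ) - 3, by omega⟩, ?_, ?_⟩
      · apply Fin.ext
        show (R.loser ⟨0,hn⟩ : ℕ) = ((R.loser ⟨0,hn⟩ : ℕ) - 3) + 3
        omega
      · rw [← hR _]
        apply FR.wins_eq_zero
        intro t ht
        refine hKw t (ht.trans (Fin.ext ?_))
        show ((R.loser ⟨0,hn⟩ : ℕ) - 3) + 3 = (R.loser ⟨0,hn⟩ : ℕ)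
        omega
  have part1b : ∀ m : Fin n, k m = 0 → lbl m ≤ R.loser ⟨0,hn⟩ := by
    intro m hkm
    have hwz : ∀ t, R.winner t ≠ lbl m := by
      intro t ht
      have hpos : 0 < R.wins (lbl m) := by
        rw [Run.wins]
        exact Finset.card_pos.mpr ⟨t, by simp [ht]⟩
      rw [hR m, hkm] at hpos
      omega
    obtain ⟨w, hw⟩ := FR.exists_nbr (hleafdeg (lbl m))
    have hlm0 : T.leaf 0 ≠ T.leaf (lbl m) := by
      intro h
      have := congrArg Fin.val (hleafinj h)
      rw [FR.val0] at this
      simp [lbl] at this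
    have hlm1 : T.leaf 1 ≠ T.leaf (lbl m) := by
      intro h
      have := congrArg Fin.val (hleafinj h)
      rw [FR.val1] at this
      simp [lbl] at this
    have hwd3 : T.G.degree w = 3 := by
      rcases hdeg w with h | h
      · exact (FR.no_leaf_adj_leaf hn hc (hleafdeg _) h hw).elim
      · exact h
    have hwv1 : w ≠ v1 := by
      rintro rfl
      exact FR.no_three_leaf hn hc hdeg hav1.symm hbv1.symm hw.symm
        hlf01 hlm0 hlm1 (hleafdeg 0) (hleafdeg 1) (hleafdeg (lbl m))
    obtain ⟨t, ht⟩ := FR.vtx_surj hdeg hleafdeg hleafinj hleafsurj hv13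
      (FR.vtx_ne_v1 hk hR hdeg hav1 hbv1) hwd3 hwv1
    have hmem : s(T.leaf (lbl m), w) ∈ T.G.edgeSet := T.G.mem_edgeSet.mpr hw
    have hvm : R.vtx t ∈ s(T.leaf (lbl m), w) := by
      rw [ht]; exact Sym2.mem_iff.mpr (Or.inr rfl)
    have hlab := FR.leaf_lab (R := R) t.2.le hw
    rcases FR.edges_at_vtx hdeg t hmem hvm with h' | h' | h'
    · rw [h', R.lab_loserE t] at hlab
      have heq : R.loser t = lbl m := Option.some_inj.mp hlab
      exact heq ▸ FR.loser_le hn hdeg hleafdeg t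
    · rw [h', R.lab_winnerE t] at hlab
      exact absurd (Option.some_inj.mp hlab) (hwz t)
    · rw [h', R.newE_unlabeled t] at hlab
      cases hlab
  refine ⟨⟨part1a, part1b⟩, ?_⟩
  -- shared setup for part 2
  obtain ⟨w0, hadj0, hLe0⟩ := FR.lab0_class (R := R) (R.lab_loserE ⟨0,hn⟩)
  have hv0 : R.vtx ⟨0,hn⟩ = w0 := FR.vtx_eq_snd hdeg hleafdeg hLe0 (R.vtx_mem _).1
  obtain ⟨wj, hadjj, hWe0⟩ := FR.lab0_class (R := R) (R.lab_winnerE ⟨0,hn⟩)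
  have hvj : R.vtx ⟨0,hn⟩ = wj := FR.vtx_eq_snd hdeg hleafdeg hWe0 (R.vtx_mem _).2.1
  obtain ⟨m0, hm0⟩ := FR.winner_lbl hk hR ⟨0,hn⟩
  obtain ⟨wN, hadjN, hNe0⟩ := FR.edge_at (R.newE_mem ⟨0,hn⟩) (R.vtx_mem ⟨0,hn⟩).2.2
  constructor
  · intro hL
    obtain ⟨e'', u'', v'', hem, hve, hvE, hne, hlab'', hunej, hilt⟩ := hL
    have hn2 : 2 ≤ n := by
      by_contra hcon
      have hn1 : n = 1 := by omega
      have hu3 : (u'' : ℕ) < n+3 := u''.2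
      have hw0v : (R.winner ⟨0,hn⟩ : ℕ) = (m0:ℕ)+3 := by rw [hm0]; rfl
      have hm0v : (m0 : ℕ) < n := m0.2
      have hiltv : (R.loser ⟨0,hn⟩ : ℕ) < (u'' : ℕ) := hilt
      exact hunej (Fin.ext (by omega))
    refine ⟨⟨m0, hm0, ?_⟩, hn2⟩
    rw [← hR m0, ← hm0, Run.wins]
    have hwne : ∀ N, ∀ t : Fin n, t.1 < N → t.1 ≠ 0 → R.winner t ≠ R.winner ⟨0,hn⟩ := by
      intro N
      induction N with
      | zero => exact fun t ht _ => absurd ht (Nat.not_lt_zero _)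
      | succ N ih =>
        intro t ht ht0 hWt
        rcases FR.origin (R := R) t.2.le (R.lab_winnerE t) with ⟨w', hadjw', hWe⟩ | ⟨s, hs1, hse⟩
        · have hvw : R.vtx t = w' := FR.vtx_eq_snd hdeg hleafdeg hWe (R.vtx_mem t).2.1
          have hwwj : w' = wj := FR.nbr_unique (hleafdeg _) (hWt ▸ hadjw') hadjj
          exact FR.vtx_ne (R := R) (s := ⟨0,hn⟩) (t := t) hdeg (Nat.pos_of_ne_zero ht0) (by rw [hvj, ← hwwj, ← hvw])
        · rcases FR.newE_label hs1 t.2.le (hse ▸ R.lab_winnerE t) with ⟨hLzs, heqs⟩ | ⟨hNLs, heqs⟩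
          · have h1 := FR.loser_le (R := R) hn hdeg hleafdeg s
            rw [← heqs, hWt] at h1
            exact absurd (R.lt_lw ⟨0,hn⟩) h1.not_gt
          · by_cases hs0 : s.1 = 0
            · have hs' : s = ⟨0,hn⟩ := Fin.ext hs0
              rw [hs'] at hNLs
              exact hNLs ⟨e'', u'', v'', hem, hve, hvE, hne, hlab'', hunej, hilt⟩
            · exact ih s (by omega) hs0 (by rw [← heqs]; exact hWt)
    have hfil : Finset.univ.filter (fun t => R.winner t = R.winner ⟨0,hn⟩) = {⟨0,hn⟩} := by
      ext t
      simp only [Finset.mem_filter, Finset.mem_univ, true_and, Finset.mem_singleton]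
      constructor
      · intro h
        by_contra hne'
        exact hwne (t.1+1) t (Nat.lt_succ_self _) (fun hv => hne' (Fin.ext hv)) h
      · rintro rfl; rfl
    rw [hfil, Finset.card_singleton]
  · rintro ⟨⟨m0', hm0', hk1⟩, hn2⟩
    by_contra hNL
    have hstep : R.lab 1 (R.newE ⟨0,hn⟩) = some (R.winner ⟨0,hn⟩) := R.step_nonlazy _ hNL
    have hwNl : wN ≠ T.leaf (R.loser ⟨0,hn⟩) := by
      intro h
      apply (R.edges_distinct ⟨0,hn⟩).2.1
      rw [hLe0, hNe0, h, ← hv0]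
      exact Sym2.eq_swap
    have hwNw : wN ≠ T.leaf (R.winner ⟨0,hn⟩) := by
      intro h
      apply (R.edges_distinct ⟨0,hn⟩).2.2
      rw [hWe0, hNe0, h, ← hvj]
      exact Sym2.eq_swap
    have hlneq : T.leaf (R.loser ⟨0,hn⟩) ≠ T.leaf (R.winner ⟨0,hn⟩) :=
      fun h => (R.lt_lw ⟨0,hn⟩).ne (hleafinj h)
    have ha0 : T.G.Adj (R.vtx ⟨0,hn⟩) (T.leaf (R.loser ⟨0,hn⟩)) := by
      rw [hv0]; exact hadj0.symm
    have haj : T.G.Adj (R.vtx ⟨0,hn⟩) (T.leaf (R.winner ⟨0,hn⟩)) := by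
      rw [hvj]; exact hadjj.symm
    have hwN3 : T.G.degree wN = 3 := by
      rcases hdeg wN with h | h
      · exact (FR.no_three_leaf hn hc hdeg ha0 haj hadjN hlneq hwNl.symm hwNw.symm
          (hleafdeg _) (hleafdeg _) h).elim
      · exact h
    have hwNv1 : wN ≠ v1 := by
      intro hwv
      have hadjv1 : T.G.Adj v1 (R.vtx ⟨0,hn⟩) := by rw [← hwv]; exact hadjN.symm
      have hl0v : T.leaf 0 ≠ R.vtx ⟨0,hn⟩ := (FR.vtx_not_leaf hdeg hleafdeg ⟨0,hn⟩ 0).symm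
      have hl1v : T.leaf 1 ≠ R.vtx ⟨0,hn⟩ := (FR.vtx_not_leaf hdeg hleafdeg ⟨0,hn⟩ 1).symm
      have hliv1 : T.leaf (R.loser ⟨0,hn⟩) ≠ v1 := fun he => hwNl (hwv.trans he.symm)
      have hljv1 : T.leaf (R.winner ⟨0,hn⟩) ≠ v1 := fun he => hwNw (hwv.trans he.symm)
      have hb := FR.card_bound hc
        {v1, R.vtx ⟨0,hn⟩, T.leaf 0, T.leaf 1, T.leaf (R.loser ⟨0,hn⟩), T.leaf (R.winner ⟨0,hn⟩)}
        v1 (by simp) ?_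
      · have c5 : ({T.leaf (R.winner ⟨0,hn⟩)} : Finset (Fin (2*n+4))).card = 1 :=
          Finset.card_singleton _
        have c4 := Finset.card_insert_le (T.leaf (R.loser ⟨0,hn⟩))
          ({T.leaf (R.winner ⟨0,hn⟩)} : Finset (Fin (2*n+4)))
        have c3 := Finset.card_insert_le (T.leaf 1)
          ({T.leaf (R.loser ⟨0,hn⟩), T.leaf (R.winner ⟨0,hn⟩)} : Finset (Fin (2*n+4)))
        have c2 := Finset.card_insert_le (T.leaf 0)
          ({T.leaf 1, T.leaf (R.loser ⟨0,hn⟩), T.leaf (R.winner ⟨0,hn⟩)} : Finset (Fin (2*n+4)))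
        have c1 := Finset.card_insert_le (R.vtx ⟨0,hn⟩)
          ({T.leaf 0, T.leaf 1, T.leaf (R.loser ⟨0,hn⟩), T.leaf (R.winner ⟨0,hn⟩)} : Finset (Fin (2*n+4)))
        have c0 := Finset.card_insert_le v1
          ({R.vtx ⟨0,hn⟩, T.leaf 0, T.leaf 1, T.leaf (R.loser ⟨0,hn⟩), T.leaf (R.winner ⟨0,hn⟩)} : Finset (Fin (2*n+4)))
        omega
      · intro a ha b hab
        simp only [Finset.mem_insert, Finset.mem_singleton] at ha ⊢
        rcases ha with rfl | rfl | rfl | rfl | rfl | rfl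
        · rcases FR.deg3_nbrs hv13 hav1.symm hbv1.symm hadjv1 hlf01
            (fun he => hl0v he) (fun he => hl1v he) b hab with rfl | rfl | rfl
          · exact Or.inr (Or.inr (Or.inl rfl))
          · exact Or.inr (Or.inr (Or.inr (Or.inl rfl)))
          · exact Or.inr (Or.inl rfl)
        · rcases FR.deg3_nbrs (FR.vtx_deg hdeg ⟨0,hn⟩) ha0 haj
            (hwv ▸ hadjN) hlneq hliv1 hljv1 b hab with rfl | rfl | rfl
          · exact Or.inr (Or.inr (Or.inr (Or.inr (Or.inl rfl))))
          · exact Or.inr (Or.inr (Or.inr (Or.inr (Or.inr rfl))))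
          · exact Or.inl rfl
        · exact Or.inl (FR.nbr_unique (hleafdeg 0) hab hav1)
        · exact Or.inl (FR.nbr_unique (hleafdeg 1) hab hbv1)
        · exact Or.inr (Or.inl (FR.nbr_unique (hleafdeg _) hab ha0.symm))
        · exact Or.inr (Or.inl (FR.nbr_unique (hleafdeg _) hab haj.symm))
    obtain ⟨t, ht⟩ := FR.vtx_surj hdeg hleafdeg hleafinj hleafsurj hv13
      (FR.vtx_ne_v1 hk hR hdeg hav1 hbv1) hwN3 hwNv1
    have ht0 : t.1 ≠ 0 := by
      intro h0
      have hteq : t = ⟨0,hn⟩ := Fin.ext h0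
      rw [hteq] at ht
      exact hadjN.ne ht
    have hmemN : R.newE ⟨0,hn⟩ ∈ T.G.edgeSet := R.newE_mem _
    have hvmN : R.vtx t ∈ R.newE ⟨0,hn⟩ := by
      rw [ht, hNe0]; exact Sym2.mem_iff.mpr (Or.inr rfl)
    have hlabN : R.lab t.1 (R.newE ⟨0,hn⟩) = some (R.winner ⟨0,hn⟩) :=
      FR.lab_mono (by omega) t.2.le hstep
    rcases FR.edges_at_vtx hdeg t hmemN hvmN with h' | h' | h'
    · rw [h', R.lab_loserE t] at hlabN
      have heq : R.loser t = R.winner ⟨0,hn⟩ := Option.some_inj.mp hlabN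
      have h1 := FR.loser_le (R := R) hn hdeg hleafdeg t
      rw [heq] at h1
      exact absurd (R.lt_lw ⟨0,hn⟩) h1.not_gt
    · rw [h', R.lab_winnerE t] at hlabN
      have hwt : R.winner t = R.winner ⟨0,hn⟩ := Option.some_inj.mp hlabN
      have hsub : ({⟨0,hn⟩, t} : Finset (Fin n)) ⊆
          Finset.univ.filter (fun s => R.winner s = lbl m0') := by
        intro s hs
        simp only [Finset.mem_insert, Finset.mem_singleton] at hs
        rw [Finset.mem_filter]
        rcases hs with rfl | rfl
        · exact ⟨Finset.mem_univ _, hm0'⟩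
        · exact ⟨Finset.mem_univ _, hwt.trans hm0'⟩
      have hcard2 : ({⟨0,hn⟩, t} : Finset (Fin n)).card = 2 := by
        rw [Finset.card_insert_of_notMem (by
          simp only [Finset.mem_singleton]
          intro h
          exact ht0 (congrArg Fin.val h).symm), Finset.card_singleton]
      have hge2 := Finset.card_le_card hsub
      rw [hcard2] at hge2
      have hrm := hR m0'
      rw [Run.wins] at hrm
      omega
    · rw [h', R.newE_unlabeled t] at hlabN
      cases hlabN
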